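/- Let p be a prime and let P and Q be finite p-groups. Then the sectional rank of the direct product P × Q equals the sum of the sectional ranks of P and Q. -/

import Mathlib

/-- `IsSectionalRankSet p P r` says that `P` has a section `H ⧸ N` (with `H ≤ P` and
`N ⊴ H`) isomorphic to the elementary abelian group `(ℤ/pℤ)^r`. -/
def HasElemAbelianSection (p : ℕ) (P : Type*) [Group P] (r : ℕ) : Prop :=
  ∃ (H : Subgroup P) (N : Subgroup H) (hN : N.Normal),
    letI := hN
    Nonempty ((H ⧸ N) ≃* (Fin r → Multiplicative (ZMod p)))

/-- The sectional rank of a group: the largest `r ≥ 0` such that the group has a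
section isomorphic to the elementary abelian group `(ℤ/pℤ)^r`. -/
noncomputable def sectionalRank (p : ℕ) (P : Type*) [Group P] : ℕ :=
  sSup { r : ℕ | HasElemAbelianSection p P r }


/-- Elementary abelian predicate: commutative with exponent dividing `p`. -/
def IsEA (p : ℕ) (G : Type*) [Group G] : Prop :=
  (∀ a b : G, a * b = b * a) ∧ ∀ a : G, a ^ p = 1

lemma IsEA.of_surjective {p : ℕ} {G G' : Type*} [Group G] [Group G']
    (f : G →* G') (hf : Function.Surjective f) (h : IsEA p G) : IsEA p G' := by
  constructor
  · intro a b
    obtain ⟨a, rfl⟩ := hf a; obtain ⟨b, rfl⟩ := hf b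
    rw [← map_mul, ← map_mul, h.1]
  · intro a
    obtain ⟨a, rfl⟩ := hf a
    rw [← map_pow, h.2, map_one]

lemma IsEA.of_iso {p : ℕ} {G G' : Type*} [Group G] [Group G']
    (e : G ≃* G') (h : IsEA p G) : IsEA p G' :=
  h.of_surjective e.toMonoidHom e.surjective

lemma IsEA.subgroup {p : ℕ} {G : Type*} [Group G] (h : IsEA p G) (H : Subgroup G) :
    IsEA p H := by
  constructor
  · intro a b; ext; exact h.1 a b
  · intro a; ext; push_cast; exact h.2 a

lemma IsEA.prod {p : ℕ} {G G' : Type*} [Group G] [Group G']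
    (h : IsEA p G) (h' : IsEA p G') : IsEA p (G × G') := by
  constructor
  · intro a b; exact Prod.ext (h.1 a.1 b.1) (h'.1 a.2 b.2)
  · intro a; exact Prod.ext (h.2 a.1) (h'.2 a.2)

lemma isEA_target (p : ℕ) (r : ℕ) : IsEA p (Fin r → Multiplicative (ZMod p)) := by
  constructor
  · intro a b; exact mul_comm a b
  · intro a
    funext i
    show (a i) ^ p = 1
    have h0 : ((a i) ^ p).toAdd = (1 : Multiplicative (ZMod p)).toAdd := by
      rw [toAdd_pow, toAdd_one, nsmul_eq_mul, ZMod.natCast_self, zero_mul]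
    exact Multiplicative.toAdd.injective h0

lemma card_target (p : ℕ) (r : ℕ) : Nat.card (Fin r → Multiplicative (ZMod p)) = p ^ r := by
  rw [Nat.card_pi]
  have : Nat.card (Multiplicative (ZMod p)) = p := by
    rw [Nat.card_congr (Multiplicative.toAdd (α := ZMod p))]
    exact Nat.card_zmod p
  simp [this]

lemma isEA_of_iso {p r : ℕ} {G : Type*} [Group G]
    (e : G ≃* (Fin r → Multiplicative (ZMod p))) : IsEA p G ∧ Nat.card G = p ^ r := by
  refine ⟨(isEA_target p r).of_iso e.symm, ?_⟩
  rw [Nat.card_congr e.toEquiv, card_target]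

lemma exists_addIso {p : ℕ} (hp : p.Prime) (A : Type*) [AddCommGroup A] [Finite A]
    (h2 : ∀ a : A, p • a = 0) :
    ∃ s, Nat.card A = p ^ s ∧ Nonempty (A ≃+ (Fin s → ZMod p)) := by
  haveI : Fact p.Prime := ⟨hp⟩
  haveI : NeZero p := ⟨hp.ne_zero⟩
  letI : Module (ZMod p) A := AddCommGroup.zmodModule h2
  have b0 := Module.Basis.ofVectorSpace (ZMod p) A
  obtain ⟨s, ⟨eι⟩⟩ := Finite.exists_equiv_fin (Module.Basis.ofVectorSpaceIndex (ZMod p) A)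
  let b := b0.reindex eι
  let e2 : A ≃+ (Fin s → ZMod p) := b.equivFun.toAddEquiv
  refine ⟨s, ?_, ⟨e2⟩⟩
  rw [Nat.card_congr e2.toEquiv, Nat.card_pi]
  simp [Nat.card_zmod]

lemma exists_iso_of_isEA {p : ℕ} (hp : p.Prime) {G : Type*} [Group G] [Finite G]
    (h : IsEA p G) :
    ∃ s, Nat.card G = p ^ s ∧ Nonempty (G ≃* (Fin s → Multiplicative (ZMod p))) := by
  letI : CommGroup G := { (inferInstance : Group G) with mul_comm := h.1 }
  haveI : Finite (Additive G) := Finite.of_equiv G Additive.ofMul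
  obtain ⟨s, hc, ⟨ea⟩⟩ := exists_addIso hp (Additive G) (by
    intro x
    rw [← ofMul_toMul x, ← ofMul_pow, h.2]
    rfl)
  refine ⟨s, ?_, ⟨?_⟩⟩
  · rw [← hc]; exact Nat.card_congr Additive.ofMul
  · exact (MulEquiv.multiplicativeAdditive G).symm.trans
      ((AddEquiv.toMultiplicative ea).trans (MulEquiv.funMultiplicative (Fin s) (ZMod p)))

/-- Transport a section through an isomorphism onto a subgroup. -/
lemma hses_of {p : ℕ} (hp : p.Prime) {P : Type*} [Group P] [Finite P] (H : Subgroup P)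
    {G : Type*} [Group G] (e : G ≃* H) (M : Subgroup G) (hM : M.Normal)
    {r : ℕ} (hEA : IsEA p (G ⧸ M)) (hcard : Nat.card (G ⧸ M) = p ^ r) :
    HasElemAbelianSection p P r := by
  haveI := hM
  let N : Subgroup H := M.map (e : G →* H)
  haveI hNn : N.Normal := hM.map (e : G →* H) e.surjective
  have eq : G ⧸ M ≃* H ⧸ N := QuotientGroup.congr M N e rfl
  haveI : Finite (G ⧸ M) := Finite.of_equiv _ eq.symm.toEquiv
  obtain ⟨s, hcards, ⟨iso⟩⟩ := exists_iso_of_isEA hp hEA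
  have hsr : s = r := Nat.pow_right_injective hp.two_le (hcards.symm.trans hcard)
  subst hsr
  exact ⟨H, N, hNn, ⟨eq.symm.trans iso⟩⟩

lemma hses_zero {p : ℕ} (hp : p.Prime) (P : Type*) [Group P] [Finite P] :
    HasElemAbelianSection p P 0 := by
  haveI : Subsingleton ((⊥ : Subgroup P) ⧸ (⊥ : Subgroup (⊥ : Subgroup P))) :=
    (QuotientGroup.mk'_surjective (⊥ : Subgroup (⊥ : Subgroup P))).subsingleton
  refine hses_of hp (⊥ : Subgroup P) (MulEquiv.refl _) ⊥ inferInstance ?_ ?_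
  · constructor
    · intro a b; exact Subsingleton.elim _ _
    · intro a; exact Subsingleton.elim _ _
  · rw [pow_zero]
    exact Nat.card_eq_one_iff_unique.2 ⟨inferInstance, inferInstance⟩

lemma hses_le {p : ℕ} (hp : p.Prime) {P : Type*} [Group P] [Finite P] {r : ℕ}
    (h : HasElemAbelianSection p P r) : r ≤ Nat.card P := by
  obtain ⟨H, N, hN, ⟨iso⟩⟩ := h
  haveI := hN
  have hc : Nat.card (H ⧸ N) = p ^ r := (isEA_of_iso iso).2
  have h1 : p ^ r ∣ Nat.card P := by
    rw [← hc]
    exact (Subgroup.card_quotient_dvd_card N).trans (Subgroup.card_subgroup_dvd_card H)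
  have h2 : p ^ r ≤ Nat.card P := Nat.le_of_dvd Nat.card_pos h1
  exact le_trans (Nat.le_of_lt (Nat.lt_pow_self (n := r) hp.one_lt)) h2

lemma hses_split {p : ℕ} (hp : p.Prime) {P Q : Type*} [Group P] [Finite P] [Group Q] [Finite Q]
    {r : ℕ} (h : HasElemAbelianSection p (P × Q) r) :
    ∃ s t, r = s + t ∧ HasElemAbelianSection p P s ∧ HasElemAbelianSection p Q t := by
  obtain ⟨H, N, hN, ⟨iso⟩⟩ := h
  haveI := hN
  have hEA : IsEA p (H ⧸ N) := (isEA_of_iso iso).1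
  have hcard : Nat.card (H ⧸ N) = p ^ r := (isEA_of_iso iso).2
  let f : H →* Q := (MonoidHom.snd P Q).comp H.subtype
  let K : Subgroup H := f.ker
  let M : Subgroup H := K ⊔ N
  haveI hMn : M.Normal := Subgroup.sup_normal K N
  have hNM : N ≤ M := le_sup_right
  have hKM : K ≤ M := le_sup_left
  let W : Subgroup (H ⧸ N) := M.map (QuotientGroup.mk' N)
  haveI hWn : W.Normal := by
    constructor
    intro w hw g
    have : g * w * g⁻¹ = w := by
      rw [hEA.1 g w, mul_assoc]; simp
    rwa [this]
  -- the subgroup W as a section of P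
  let ψ : K →* (H ⧸ N) := (QuotientGroup.mk' N).comp K.subtype
  have hψrange : ψ.range = W := by
    show ((QuotientGroup.mk' N).comp K.subtype).range = M.map (QuotientGroup.mk' N)
    rw [MonoidHom.range_comp, Subgroup.range_subtype, Subgroup.map_sup]
    have : N.map (QuotientGroup.mk' N) = ⊥ := by
      rw [Subgroup.map_eq_bot_iff, QuotientGroup.ker_mk']
    rw [this, sup_bot_eq]
  let eW : K ⧸ ψ.ker ≃* W :=
    (QuotientGroup.quotientKerEquivRange ψ).trans (MulEquiv.subgroupCongr hψrange)
  -- cardinalities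
  have hWdvd : Nat.card W ∣ p ^ r := hcard ▸ Subgroup.card_subgroup_dvd_card W
  obtain ⟨s, hsle, hWs⟩ := (Nat.dvd_prime_pow hp).1 hWdvd
  set t := r - s with ht
  have hts : s + t = r := by omega
  have hprod : Nat.card W * Nat.card ((H ⧸ N) ⧸ W) = p ^ r := by
    rw [← hcard, mul_comm]
    exact (Subgroup.card_eq_card_quotient_mul_card_subgroup W).symm
  have hQcard : Nat.card ((H ⧸ N) ⧸ W) = p ^ t := by
    have h5 : Nat.card W * Nat.card ((H ⧸ N) ⧸ W) = Nat.card W * p ^ t := by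
      rw [hprod, hWs, ← pow_add, hts]
    exact Nat.eq_of_mul_eq_mul_left Nat.card_pos h5
  -- the P side
  let g : K →* P := (MonoidHom.fst P Q).comp (H.subtype.comp K.subtype)
  have hginj : Function.Injective g := by
    intro x y hxy
    have hx : ((x : H) : P × Q).2 = 1 := x.2
    have hy : ((y : H) : P × Q).2 = 1 := y.2
    have : ((x : H) : P × Q) = ((y : H) : P × Q) := Prod.ext hxy (hx.trans hy.symm)
    exact Subtype.ext (Subtype.ext this)
  have hP : HasElemAbelianSection p P s := by
    refine hses_of hp g.range (MonoidHom.ofInjective hginj) ψ.ker inferInstance ?_ ?_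
    · exact (hEA.subgroup W).of_iso eW.symm
    · rw [Nat.card_congr eW.toEquiv, hWs]
  -- the Q side
  let e2 : H ⧸ K ≃* f.range := QuotientGroup.quotientKerEquivRange f
  let M2 : Subgroup (H ⧸ K) := M.map (QuotientGroup.mk' K)
  haveI : M2.Normal := hMn.map _ (QuotientGroup.mk'_surjective K)
  let e3 : (H ⧸ K) ⧸ M2 ≃* H ⧸ M := QuotientGroup.quotientQuotientEquivQuotient K M hKM
  let e4 : (H ⧸ N) ⧸ W ≃* H ⧸ M := QuotientGroup.quotientQuotientEquivQuotient N M hNM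
  have hQ : HasElemAbelianSection p Q t := by
    refine hses_of hp f.range e2 M2 inferInstance ?_ ?_
    · exact (hEA.of_surjective (QuotientGroup.mk' W) (QuotientGroup.mk'_surjective W)).of_iso
        (e4.trans e3.symm)
    · rw [Nat.card_congr (e3.trans e4.symm).toEquiv, hQcard]
  exact ⟨s, t, hts.symm, hP, hQ⟩

lemma hses_join {p : ℕ} (hp : p.Prime) {P Q : Type*} [Group P] [Finite P] [Group Q] [Finite Q]
    {a b : ℕ} (ha : HasElemAbelianSection p P a) (hb : HasElemAbelianSection p Q b) :
    HasElemAbelianSection p (P × Q) (a + b) := by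
  obtain ⟨H1, N1, h1, ⟨i1⟩⟩ := ha
  obtain ⟨H2, N2, h2, ⟨i2⟩⟩ := hb
  haveI := h1; haveI := h2
  let χ : H1 × H2 →* (H1 ⧸ N1) × (H2 ⧸ N2) :=
    (QuotientGroup.mk' N1).prodMap (QuotientGroup.mk' N2)
  have hχ : Function.Surjective χ := by
    rintro ⟨x, y⟩
    obtain ⟨u, hu⟩ := QuotientGroup.mk'_surjective N1 x
    obtain ⟨v, hv⟩ := QuotientGroup.mk'_surjective N2 y
    exact ⟨(u, v), Prod.ext hu hv⟩
  let eq := QuotientGroup.quotientKerEquivOfSurjective χ hχ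
  refine hses_of hp (H1.prod H2) (Subgroup.prodEquiv H1 H2).symm χ.ker inferInstance ?_ ?_
  · exact (((isEA_of_iso i1).1).prod ((isEA_of_iso i2).1)).of_iso eq.symm
  · rw [Nat.card_congr eq.toEquiv, Nat.card_prod, (isEA_of_iso i1).2, (isEA_of_iso i2).2,
      pow_add]

theorem sectionalRank_prod (p : ℕ) (hp : p.Prime)
    (P Q : Type*) [Group P] [Fintype P] [Group Q] [Fintype Q]
    (hP : IsPGroup p P) (hQ : IsPGroup p Q) :
    sectionalRank p (P × Q) = sectionalRank p P + sectionalRank p Q := by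
  have bddP : BddAbove {r | HasElemAbelianSection p P r} :=
    ⟨Nat.card P, fun r hr => hses_le hp hr⟩
  have bddQ : BddAbove {r | HasElemAbelianSection p Q r} :=
    ⟨Nat.card Q, fun r hr => hses_le hp hr⟩
  have bddPQ : BddAbove {r | HasElemAbelianSection p (P × Q) r} :=
    ⟨Nat.card (P × Q), fun r hr => hses_le hp hr⟩
  have hP0 : HasElemAbelianSection p P 0 := hses_zero hp P
  have hQ0 : HasElemAbelianSection p Q 0 := hses_zero hp Q
  have hPQ0 : HasElemAbelianSection p (P × Q) 0 := hses_zero hp (P × Q)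
  show sSup {r | HasElemAbelianSection p (P × Q) r} =
    sSup {r | HasElemAbelianSection p P r} + sSup {r | HasElemAbelianSection p Q r}
  have ne_P : Set.Nonempty {r | HasElemAbelianSection p P r} := ⟨0, hP0⟩
  have ne_Q : Set.Nonempty {r | HasElemAbelianSection p Q r} := ⟨0, hQ0⟩
  have ne_PQ : Set.Nonempty {r | HasElemAbelianSection p (P × Q) r} := ⟨0, hPQ0⟩
  apply le_antisymm
  · refine csSup_le ne_PQ ?_
    intro r hr
    obtain ⟨s, t, rfl, hs, ht⟩ := hses_split hp hr
    have h1 : s ∈ {r | HasElemAbelianSection p P r} := hs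
    have h2 : t ∈ {r | HasElemAbelianSection p Q r} := ht
    exact add_le_add (le_csSup bddP h1) (le_csSup bddQ h2)
  · have ha : HasElemAbelianSection p P (sSup {r | HasElemAbelianSection p P r}) :=
      Nat.sSup_mem ne_P bddP
    have hb : HasElemAbelianSection p Q (sSup {r | HasElemAbelianSection p Q r}) :=
      Nat.sSup_mem ne_Q bddQ
    have hj : (sSup {r | HasElemAbelianSection p P r} + sSup {r | HasElemAbelianSection p Q r})
        ∈ {r | HasElemAbelianSection p (P × Q) r} := hses_join hp ha hb
    exact le_csSup bddPQ hj
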